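/- Let p₁, …, p_k be nonnegative reals with p₁ + ⋯ + p_k = 1 and p_i ≤ 1/2 for every i. Then ∏_{i=1}^k (1 - p_i) ≥ 1/4. -/
import Mathlib

lemma key_one_sub (x : ℝ) (h0 : 0 ≤ x) (h2 : x ≤ 1 / 2) :
    Real.exp (Real.log (1 / 4) * x) ≤ 1 - x := by
  have hlog : Real.log (1 / 4) / 2 = Real.log (1 / 2) := by
    have : (1 / 4 : ℝ) = (1 / 2) ^ 2 := by norm_num
    rw [this, Real.log_pow]
    push_cast
    ring
  have hexp : Real.exp (Real.log (1 / 4) / 2) = 1 / 2 := by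
    rw [hlog, Real.exp_log (by norm_num)]
  have hc := convexOn_exp.2 (Set.mem_univ (0 : ℝ))
    (Set.mem_univ (Real.log (1 / 4) / 2))
    (by linarith : (0:ℝ) ≤ 1 - 2 * x) (by linarith : (0:ℝ) ≤ 2 * x)
    (by ring : (1 - 2 * x) + 2 * x = 1)
  simp only [smul_eq_mul, mul_zero, zero_add, Real.exp_zero, mul_one, hexp] at hc
  have harg : (2 * x) * (Real.log (1 / 4) / 2) = Real.log (1 / 4) * x := by ring
  rw [harg] at hc
  linarith

theorem prod_one_sub_ge_quarter (k : ℕ) (p : Fin k → ℝ)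
    (hp0 : ∀ i, 0 ≤ p i) (hp1 : ∑ i, p i = 1) (hphalf : ∀ i, p i ≤ 1 / 2) :
    ∏ i, (1 - p i) ≥ 1 / 4 := by
  have h1 : ∏ i, Real.exp (Real.log (1 / 4) * p i) ≤ ∏ i, (1 - p i) :=
    Finset.prod_le_prod (fun i _ => (Real.exp_pos _).le)
      (fun i _ => key_one_sub (p i) (hp0 i) (hphalf i))
  have h2 : ∏ i, Real.exp (Real.log (1 / 4) * p i) = 1 / 4 := by
    rw [← Real.exp_sum, ← Finset.mul_sum, hp1, mul_one,
      Real.exp_log (by norm_num)]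
  linarith
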